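/- If (π_φ, H_φ, J_φ, V_φ) satisfies φ(g) = V_φ*π_φ(g)V_φ, [π_φ(G)V_φH] = H_φ, and V_φ*π_φ(g)*π_φ(g')V_φ = V_φ*π_φ(α(g⁻¹)g')V_φ for all g,g' (Heo's minimal Naimark–KSGNS dilation), then with W = J_φ V_φ the quadruple (π_φ, H_φ, J_φ, W) also satisfies all three conditions: φ(g) = W*π_φ(g)W, [π_φ(G)WH] = H_φ, and W*π_φ(g)*π_φ(g')W = W*π_φ(α(g⁻¹)g')W. -/

import Mathlib

open scoped ComplexOrder

noncomputable section

def IsInvolution (G : Type*) [Group G] (α : G → G) : Prop :=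
  (∀ g, α (α g) = g) ∧ α 1 = 1 ∧ ∀ g : G, α g⁻¹ = (α g)⁻¹

def IsAlphaCP {G : Type*} [Group G] (α : G → G)
    {H : Type*} [NormedAddCommGroup H] [InnerProductSpace ℂ H] [CompleteSpace H]
    (φ : G → H →L[ℂ] H) : Prop :=
  (∀ g₁ g₂ : G, φ (α g₁ * α g₂) = φ (α (g₁ * g₂)) ∧ φ (α (g₁ * g₂)) = φ (g₁ * g₂)) ∧
  (∀ (n : ℕ) (g : Fin n → G) (ξ : Fin n → H),
    0 ≤ ∑ i, ∑ j, (inner ℂ (φ ((α (g i))⁻¹ * g j) (ξ j)) (ξ i) : ℂ)) ∧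
  (∃ K > (0 : ℝ), ∀ (n : ℕ) (g : Fin n → G) (ξ : Fin n → H),
    ∑ i, ∑ j, (inner ℂ (((ContinuousLinearMap.adjoint (φ (g i))) ∘L φ (g j)) (ξ j)) (ξ i) : ℂ) ≤
      (K : ℂ) * ∑ i, ∑ j, (inner ℂ (φ ((α (g i))⁻¹ * g j) (ξ j)) (ξ i) : ℂ)) ∧
  (∀ g : G, ∃ M > (0 : ℝ), ∀ (n : ℕ) (gs : Fin n → G) (ξ : Fin n → H),
    ∑ i, ∑ j, (inner ℂ (φ ((α (g * gs i))⁻¹ * (g * gs j)) (ξ j)) (ξ i) : ℂ) ≤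
      (M : ℂ) * ∑ i, ∑ j, (inner ℂ (φ ((α (gs i))⁻¹ * gs j) (ξ j)) (ξ i) : ℂ))

open ContinuousLinearMap in
/-- On a minimal dilation, `π(g)* V = π(α g⁻¹) V`. -/
private lemma heo_adjoint_aux {G : Type*} [Group G] (α : G → G)
    {H : Type*} [NormedAddCommGroup H] [InnerProductSpace ℂ H] [CompleteSpace H]
    {K : Type*} [NormedAddCommGroup K] [InnerProductSpace ℂ K] [CompleteSpace K]
    (hα : IsInvolution G α)
    (φ : G → H →L[ℂ] H)
    (π : G → K →L[ℂ] K) (hπmul : ∀ g g', π (g * g') = π g ∘L π g')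
    (V : H →L[ℂ] K)
    (ha : ∀ g : G, φ g = adjoint V ∘L π g ∘L V)
    (hb : (Submodule.span ℂ {x : K | ∃ g ξ, x = π g (V ξ)}).topologicalClosure = ⊤)
    (hc : ∀ g g' : G, adjoint V ∘L adjoint (π g) ∘L π g' ∘L V =
        adjoint V ∘L π (α g⁻¹ * g') ∘L V) (h : G) :
    adjoint (π h) ∘L V = π (α h⁻¹) ∘L V := by
  set T : H →L[ℂ] K := adjoint (π h) ∘L V - π (α h⁻¹) ∘L V with hT
  have hTz : ∀ y : K, adjoint T y = 0 := by
    have hker : Submodule.span ℂ {x : K | ∃ g ξ, x = π g (V ξ)} ≤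
        LinearMap.ker (adjoint T : K →ₗ[ℂ] H) := by
      rw [Submodule.span_le]
      rintro y ⟨g, ξ, rfl⟩
      have e3 : α (α h⁻¹)⁻¹ = h := by rw [← hα.2.2, inv_inv, hα.1]
      have e2 := ContinuousLinearMap.ext_iff.mp (hc (α h⁻¹) g) ξ
      rw [e3] at e2
      simp only [comp_apply] at e2
      have e1 := ContinuousLinearMap.ext_iff.mp (hπmul h g) (V ξ)
      simp only [comp_apply] at e1
      simp only [LinearMap.mem_ker, SetLike.mem_coe, hT, map_sub, adjoint_comp,
        adjoint_adjoint, ContinuousLinearMap.coe_coe, sub_apply, comp_apply, e2, ← e1, sub_self]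
    have hker' := Submodule.topologicalClosure_minimal _ hker
      (ContinuousLinearMap.isClosed_ker (adjoint T))
    rw [hb] at hker'
    intro y
    exact hker' (Submodule.mem_top (x := y))
  have : adjoint T = 0 := ContinuousLinearMap.ext fun y => hTz y
  have hT0 : T = 0 := by
    calc T = adjoint (adjoint T) := (adjoint_adjoint T).symm
    _ = 0 := by rw [this]; simp
  exact sub_eq_zero.mp hT0

open ContinuousLinearMap in
theorem heo_dilation_JV {G : Type*} [Group G] (α : G → G)
    {H : Type*} [NormedAddCommGroup H] [InnerProductSpace ℂ H] [CompleteSpace H]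
    {K : Type*} [NormedAddCommGroup K] [InnerProductSpace ℂ K] [CompleteSpace K]
    (hα : IsInvolution G α)
    (φ : G → H →L[ℂ] H) (hφ : IsAlphaCP α φ)
    (J : K →L[ℂ] K) (hJsa : adjoint J = J) (hJinv : J ∘L J = 1)
    (π : G → K →L[ℂ] K) (hπ1 : π 1 = 1) (hπmul : ∀ g g', π (g * g') = π g ∘L π g')
    (hπJ : ∀ g : G, π g⁻¹ = J ∘L adjoint (π g) ∘L J)
    (V : H →L[ℂ] K)
    (ha : ∀ g : G, φ g = adjoint V ∘L π g ∘L V)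
    (hb : (Submodule.span ℂ {x : K | ∃ g ξ, x = π g (V ξ)}).topologicalClosure = ⊤)
    (hc : ∀ g g' : G, adjoint V ∘L adjoint (π g) ∘L π g' ∘L V =
        adjoint V ∘L π (α g⁻¹ * g') ∘L V) :
    (∀ g : G, φ g = adjoint (J ∘L V) ∘L π g ∘L (J ∘L V)) ∧
    (Submodule.span ℂ {x : K | ∃ g ξ, x = π g ((J ∘L V) ξ)}).topologicalClosure = ⊤ ∧
    (∀ g g' : G, adjoint (J ∘L V) ∘L adjoint (π g) ∘L π g' ∘L (J ∘L V) =
        adjoint (J ∘L V) ∘L π (α g⁻¹ * g') ∘L (J ∘L V)) := by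
  -- basic facts
  have hJJ : ∀ x : K, J (J x) = x := by
    intro x
    have := ContinuousLinearMap.ext_iff.mp hJinv x
    simpa using this
  have haV : ∀ (h : G) (ξ : H), adjoint (π h) (V ξ) = π (α h⁻¹) (V ξ) := by
    intro h ξ
    have := ContinuousLinearMap.ext_iff.mp
      (heo_adjoint_aux α hα φ π hπmul V ha hb hc h) ξ
    simpa using this
  have hπJ' : ∀ (g : G) (x : K), π g⁻¹ x = J (adjoint (π g) (J x)) := by
    intro g x
    have := ContinuousLinearMap.ext_iff.mp (hπJ g) x
    simpa using this
  have hπgJ : ∀ (g : G) (x : K), π g (J x) = J (adjoint (π g⁻¹) x) := by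
    intro g x
    have := hπJ' g⁻¹ (J x)
    rw [inv_inv, hJJ] at this
    exact this
  have hadjπJ : ∀ (g : G) (x : K), adjoint (π g) (J x) = J (π g⁻¹ x) := by
    intro g x
    rw [hπJ' g x, hJJ]
  have hWadj : adjoint (J ∘L V) = adjoint V ∘L J := by rw [adjoint_comp, hJsa]
  have hφα : ∀ g : G, φ (α g) = φ g := by
    intro g
    have := (hφ.1 g 1).2
    simpa [hα.2.1] using this
  -- part (a)
  have p1 : ∀ g : G, φ g = adjoint (J ∘L V) ∘L π g ∘L (J ∘L V) := by
    intro g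
    rw [hWadj]
    ext ξ
    simp only [comp_apply]
    rw [hπgJ g (V ξ), hJJ, haV g⁻¹ ξ, inv_inv]
    have := ContinuousLinearMap.ext_iff.mp (ha (α g)) ξ
    simp only [comp_apply] at this
    rw [← this, hφα]
  refine ⟨p1, ?_, ?_⟩
  · -- part (b): minimality
    rw [eq_top_iff]
    intro x _
    have hx : J x ∈ (Submodule.span ℂ {x : K | ∃ g ξ, x = π g (V ξ)}).topologicalClosure := by
      rw [hb]; trivial
    have hx' : J x ∈ closure ((Submodule.span ℂ {x : K | ∃ g ξ, x = π g (V ξ)} : Submodule ℂ K) : Set K) := by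
      rwa [← Submodule.topologicalClosure_coe]
    have hmaps : Set.MapsTo J
        ((Submodule.span ℂ {x : K | ∃ g ξ, x = π g (V ξ)} : Submodule ℂ K) : Set K)
        ((Submodule.span ℂ {x : K | ∃ g ξ, x = π g ((J ∘L V) ξ)} : Submodule ℂ K) : Set K) := by
      intro y hy
      simp only [SetLike.mem_coe] at hy ⊢
      induction hy using Submodule.span_induction with
      | mem z hz =>
          obtain ⟨g, ξ, rfl⟩ := hz
          apply Submodule.subset_span
          refine ⟨α g, ξ, ?_⟩
          -- J (π g (V ξ)) = π (α g) ((J ∘L V) ξ)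
          have h1 : π (α g) ((J ∘L V) ξ) = J (π g (V ξ)) := by
            simp only [comp_apply]
            rw [hπgJ (α g) (V ξ), haV ((α g)⁻¹) ξ, inv_inv, hα.1]
          exact h1.symm
      | zero => simp
      | add a b _ _ hA hB => rw [map_add]; exact Submodule.add_mem _ hA hB
      | smul c a _ hA => rw [map_smul]; exact Submodule.smul_mem _ c hA
    have := map_mem_closure J.continuous hx' hmaps
    rw [hJJ] at this
    rw [← SetLike.mem_coe, Submodule.topologicalClosure_coe]
    exact this
  · -- part (c)
    intro g g'
    ext ξ
    rw [hWadj]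
    simp only [comp_apply]
    -- RHS via p1
    have hrhs := ContinuousLinearMap.ext_iff.mp (p1 (α g⁻¹ * g')) ξ
    rw [hWadj] at hrhs
    simp only [comp_apply] at hrhs
    rw [← hrhs]
    -- LHS computation
    rw [hπgJ g' (V ξ), hadjπJ g (adjoint (π g'⁻¹) (V ξ)), hJJ, haV g'⁻¹ ξ, inv_inv]
    have hmul := ContinuousLinearMap.ext_iff.mp (hπmul g⁻¹ (α g')) (V ξ)
    simp only [comp_apply] at hmul
    rw [← hmul]
    have := ContinuousLinearMap.ext_iff.mp (ha (g⁻¹ * α g')) ξ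
    simp only [comp_apply] at this
    rw [← this]
    -- φ (g⁻¹ * α g') = φ (α g⁻¹ * g')
    have h1 := (hφ.1 g⁻¹ (α g')).1
    have h2 := (hφ.1 g⁻¹ (α g')).2
    rw [hα.1] at h1
    rw [h1, h2]
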